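/- For any realization y of r (not necessarily integral), Σ_{e∈E(K_V)} a(e)y(e) ≥ Σ_{e∈E(T)} l(e)·R(X_e), where a is a tree metric represented by T and l. -/

import Mathlib

open scoped Classical

namespace StmtAux

open SimpleGraph

variable {W : Type*}

/-- In a connected graph, after deleting an edge, every vertex is reachable
from one of the two endpoints. -/
lemma sides (T : SimpleGraph W) (hc : T.Connected) {u v : W} (h : T.Adj u v) (x : W) :
    (T.deleteEdges {s(u,v)}).Reachable u x ∨ (T.deleteEdges {s(u,v)}).Reachable v x := by
  obtain ⟨w⟩ := hc u x
  obtain ⟨q, hq⟩ : ∃ p : T.Walk u x, p.IsPath := ⟨(w.toPath : T.Path u x).1, (w.toPath).2⟩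
  by_cases he : s(u,v) ∈ q.edges
  · cases q with
    | nil => simp at he
    | cons h' q' =>
      rename_i w'
      rw [SimpleGraph.Walk.cons_isPath_iff] at hq
      rw [SimpleGraph.Walk.edges_cons, List.mem_cons] at he
      rcases he with he | he
      · have hwv : w' = v := by
          rcases Sym2.eq_iff.mp he with ⟨-, h2⟩ | ⟨-, h2⟩
          · exact h2.symm
          · exact absurd h2.symm h.ne
        have hne : s(u,v) ∉ q'.edges := by
          rw [he]
          intro hmem
          exact hq.2 (q'.fst_mem_support_of_mem_edges hmem)
        have hreach : (T.deleteEdges {s(u,v)}).Reachable w' x :=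
          ⟨q'.toDeleteEdge s(u,v) hne⟩
        exact Or.inr (hwv ▸ hreach)
      · exact absurd (q'.fst_mem_support_of_mem_edges he) hq.2
  · exact Or.inl ⟨q.toDeleteEdge _ he⟩

/-- In a tree, an edge lies on a path iff its removal separates the endpoints. -/
lemma mem_path_iff (T : SimpleGraph W) (hT : T.IsTree) {i j : W} (p : T.Walk i j)
    (hp : p.IsPath) (e : Sym2 W) :
    e ∈ p.edges ↔ ¬ (T.deleteEdges {e}).Reachable i j := by
  constructor
  · rintro hmem ⟨w⟩
    obtain ⟨q, hq⟩ : ∃ q : (T.deleteEdges {e}).Walk i j, q.IsPath :=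
      ⟨(w.toPath).1, (w.toPath).2⟩
    have hsub : ∀ e' ∈ q.edges, e' ∈ T.edgeSet := by
      intro e' he'
      have := q.edges_subset_edgeSet he'
      rw [SimpleGraph.edgeSet_deleteEdges] at this
      exact this.1
    have hq' : (q.transfer T hsub).IsPath := hq.transfer hsub
    have := hT.IsAcyclic.path_unique ⟨p, hp⟩ ⟨q.transfer T hsub, hq'⟩
    have hedges : p.edges = q.edges := by
      rw [show p = q.transfer T hsub from congrArg Subtype.val this,
        SimpleGraph.Walk.edges_transfer]
    rw [hedges] at hmem
    have := q.edges_subset_edgeSet hmem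
    rw [SimpleGraph.edgeSet_deleteEdges] at this
    exact this.2 rfl
  · intro h
    by_contra hne
    exact h ⟨p.toDeleteEdge e hne⟩

/-- In a tree, two vertices are reachable after deleting an edge iff they lie on the
same side as measured from any base point. -/
lemma reach_iff (T : SimpleGraph W) (hT : T.IsTree) {e : Sym2 W} (he : e ∈ T.edgeSet)
    (v₀ x y : W) :
    (T.deleteEdges {e}).Reachable x y ↔
      ((T.deleteEdges {e}).Reachable v₀ x ↔ (T.deleteEdges {e}).Reachable v₀ y) := by
  induction e with
  | _ u v =>
    rw [SimpleGraph.mem_edgeSet] at he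
    have hbridge : ¬ (T.deleteEdges {s(u,v)}).Reachable u v := by
      have := (isAcyclic_iff_forall_adj_isBridge.mp hT.IsAcyclic) he
      exact this
    have key : ∀ a b : W, (T.deleteEdges {s(u,v)}).Reachable a b ↔
        ((T.deleteEdges {s(u,v)}).Reachable u a ↔ (T.deleteEdges {s(u,v)}).Reachable u b) := by
      intro a b
      constructor
      · intro hab
        exact ⟨fun h => h.trans hab, fun h => h.trans hab.symm⟩
      · intro hiff
        rcases sides T hT.isConnected he a with ha | ha <;>
          rcases sides T hT.isConnected he b with hb | hb
        · exact ha.symm.trans hb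
        · exact absurd ((hiff.mp ha).trans hb.symm) hbridge
        · exact absurd ((hiff.mpr hb).trans ha.symm) hbridge
        · exact ha.symm.trans hb
    rw [key x y, key v₀ x, key v₀ y]
    tauto

lemma cross_sum {W : Type*} [Fintype W] [DecidableEq W] (X : Finset W) (g : W → W → ℝ) :
    ∑ i : W, ∑ j : W, (if i ∈ X ∧ j ∉ X then g i j else 0)
      = ∑ i ∈ X, ∑ j ∈ Xᶜ, g i j := by
  have h1 : ∀ i : W, ∑ j : W, (if i ∈ X ∧ j ∉ X then g i j else 0)
      = if i ∈ X then ∑ j ∈ Xᶜ, g i j else 0 := by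
    intro i
    by_cases hi : i ∈ X
    · simp only [hi, true_and, if_true]
      rw [← Finset.sum_filter]
      congr 1
      ext j; simp [Finset.mem_compl]
    · simp [hi]
  simp_rw [h1]
  rw [← Finset.sum_filter]
  congr 1
  ext i; simp

end StmtAux

/-- Lower bound: for any (not necessarily integral) realization `y` of `r`,
`Σ_{e ∈ E(K_V)} a(e)·y(e) ≥ Σ_{e ∈ E(T)} l(e)·R(X_e)`, where the cost `a` is the tree
metric represented by the tree `T` and the nonnegative lengths `l` (the left-hand side
is written as half the sum over ordered pairs). -/
theorem stmt_16 {W : Type*} [Fintype W] [DecidableEq W]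
    (T : SimpleGraph W) (hT : T.IsTree)
    (V : Finset W) (v₀ : W) (hv₀ : v₀ ∈ V)
    (r : W → W → ℕ) (hrsymm : ∀ i j, r i j = r j i)
    (l : Sym2 W → ℝ) (hl : ∀ e, 0 ≤ l e)
    (a : W → W → ℝ) (hasymm : ∀ i j, a i j = a j i)
    (ha : ∀ i j : W, i ∈ V → j ∈ V → i ≠ j →
      ∀ p : T.Walk i j, p.IsPath → a i j = (p.edges.map l).sum)
    (Xe : Sym2 W → Finset W)
    (hXe : ∀ e, Xe e = V.filter fun x => (T.deleteEdges {e}).Reachable v₀ x)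
    (R : Finset W → ℕ)
    (hR : ∀ X : Finset W, R X = (X ×ˢ (V \ X)).sup fun p => r p.1 p.2)
    (y : W → W → ℝ) (hy0 : ∀ i j, 0 ≤ y i j) (hysymm : ∀ i j, y i j = y j i)
    (hyV : ∀ i j, y i j ≠ 0 → i ∈ V ∧ j ∈ V ∧ i ≠ j)
    (hreal : ∀ s t : W, s ∈ V → t ∈ V → s ≠ t → ∀ X : Finset W,
      s ∈ X → t ∉ X → (r s t : ℝ) ≤ ∑ i ∈ X, ∑ j ∈ Xᶜ, y i j) :
    ∑ e ∈ T.edgeFinset, l e * (R (Xe e) : ℝ)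
      ≤ (1 / 2) * ∑ i : W, ∑ j : W, a i j * y i j := by
  classical
  -- separation characterization
  have hsep : ∀ e ∈ T.edgeFinset, ∀ i ∈ V, ∀ j ∈ V,
      ((T.deleteEdges {e}).Reachable i j ↔ (i ∈ Xe e ↔ j ∈ Xe e)) := by
    intro e he i hi j hj
    have h1 : i ∈ Xe e ↔ (T.deleteEdges {e}).Reachable v₀ i := by
      rw [hXe e, Finset.mem_filter]; simp [hi]
    have h2 : j ∈ Xe e ↔ (T.deleteEdges {e}).Reachable v₀ j := by
      rw [hXe e, Finset.mem_filter]; simp [hj]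
    rw [h1, h2]
    exact StmtAux.reach_iff T hT (SimpleGraph.mem_edgeFinset.mp he) v₀ i j
  -- per-pair identity
  have key : ∀ i j : W, a i j * y i j =
      (∑ e ∈ T.edgeFinset, if i ∈ Xe e ↔ j ∈ Xe e then 0 else l e) * y i j := by
    intro i j
    by_cases hy : y i j = 0
    · rw [hy, mul_zero, mul_zero]
    obtain ⟨hi, hj, hij⟩ := hyV i j hy
    obtain ⟨w⟩ := hT.isConnected i j
    obtain ⟨q, hq⟩ : ∃ p : T.Walk i j, p.IsPath := ⟨(w.toPath).1, (w.toPath).2⟩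
    rw [ha i j hi hj hij q hq]
    congr 1
    have hnodup := hq.edges_nodup
    have hsum1 : (q.edges.map l).sum = ∑ e ∈ q.edges.toFinset, l e := by
      rw [Finset.sum_list_map_count]
      refine Finset.sum_congr rfl fun e he => ?_
      rw [List.count_eq_one_of_mem hnodup (List.mem_toFinset.mp he), one_smul]
    have hfilter : T.edgeFinset.filter (· ∈ q.edges) = q.edges.toFinset := by
      ext e
      simp only [Finset.mem_filter, List.mem_toFinset, SimpleGraph.mem_edgeFinset]
      exact ⟨fun h => h.2, fun h => ⟨q.edges_subset_edgeSet h, h⟩⟩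
    have hsum2 : ∑ e ∈ q.edges.toFinset, l e
        = ∑ e ∈ T.edgeFinset, if e ∈ q.edges then l e else 0 := by
      rw [← Finset.sum_filter, hfilter]
    rw [hsum1, hsum2]
    refine Finset.sum_congr rfl fun e he => ?_
    have hmem_iff := StmtAux.mem_path_iff T hT q hq e
    have hs := hsep e he i hi j hj
    by_cases h : i ∈ Xe e ↔ j ∈ Xe e
    · have : e ∉ q.edges := by rw [hmem_iff, not_not]; exact hs.mpr h
      simp [h, this]
    · have : e ∈ q.edges := by rw [hmem_iff]; exact fun hr => h (hs.mp hr)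
      simp [h, this]
  -- total sum rearrangement
  have hBig : ∑ i : W, ∑ j : W, a i j * y i j
      = ∑ e ∈ T.edgeFinset, l e * (2 * ∑ i ∈ Xe e, ∑ j ∈ (Xe e)ᶜ, y i j) := by
    have step1 : ∑ i : W, ∑ j : W, a i j * y i j
        = ∑ e ∈ T.edgeFinset, ∑ i : W, ∑ j : W,
            (if i ∈ Xe e ↔ j ∈ Xe e then (0:ℝ) else l e * y i j) := by
      have h1 : ∀ i j : W, a i j * y i j = ∑ e ∈ T.edgeFinset,
          (if i ∈ Xe e ↔ j ∈ Xe e then (0:ℝ) else l e * y i j) := by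
        intro i j
        rw [key i j, Finset.sum_mul]
        refine Finset.sum_congr rfl fun e _ => ?_
        rw [ite_mul, zero_mul]
      simp_rw [h1]
      calc ∑ i : W, ∑ j : W, ∑ e ∈ T.edgeFinset,
            (if i ∈ Xe e ↔ j ∈ Xe e then (0:ℝ) else l e * y i j)
          = ∑ i : W, ∑ e ∈ T.edgeFinset, ∑ j : W,
            (if i ∈ Xe e ↔ j ∈ Xe e then (0:ℝ) else l e * y i j) :=
            Finset.sum_congr rfl fun i _ => Finset.sum_comm
        _ = ∑ e ∈ T.edgeFinset, ∑ i : W, ∑ j : W,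
            (if i ∈ Xe e ↔ j ∈ Xe e then (0:ℝ) else l e * y i j) :=
            Finset.sum_comm
    rw [step1]
    refine Finset.sum_congr rfl fun e _ => ?_
    have split : ∀ i j : W, (if i ∈ Xe e ↔ j ∈ Xe e then (0:ℝ) else l e * y i j)
        = (if i ∈ Xe e ∧ j ∉ Xe e then l e * y i j else 0)
          + (if j ∈ Xe e ∧ i ∉ Xe e then l e * y i j else 0) := by
      intro i j
      by_cases hi : i ∈ Xe e <;> by_cases hj : j ∈ Xe e <;> simp [hi, hj]
    simp_rw [split, Finset.sum_add_distrib]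
    have h2 : ∑ i : W, ∑ j : W, (if j ∈ Xe e ∧ i ∉ Xe e then l e * y i j else 0)
        = ∑ i ∈ Xe e, ∑ j ∈ (Xe e)ᶜ, l e * y j i := by
      rw [Finset.sum_comm]
      exact StmtAux.cross_sum (Xe e) (fun i j => l e * y j i)
    rw [StmtAux.cross_sum (Xe e) (fun i j => l e * y i j), h2]
    have h3 : ∑ i ∈ Xe e, ∑ j ∈ (Xe e)ᶜ, l e * y j i
        = ∑ i ∈ Xe e, ∑ j ∈ (Xe e)ᶜ, l e * y i j := by
      refine Finset.sum_congr rfl fun i _ => Finset.sum_congr rfl fun j _ => ?_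
      rw [hysymm]
    rw [h3]
    simp_rw [← Finset.mul_sum]
    ring
  -- per-edge bound
  have hC : ∀ e ∈ T.edgeFinset, (R (Xe e) : ℝ) ≤ ∑ i ∈ Xe e, ∑ j ∈ (Xe e)ᶜ, y i j := by
    intro e _
    rw [hR]
    rcases ((Xe e) ×ˢ (V \ Xe e)).eq_empty_or_nonempty with hemp | hne
    · rw [hemp, Finset.sup_empty]
      simp only [Nat.bot_eq_zero, Nat.cast_zero]
      exact Finset.sum_nonneg fun i _ => Finset.sum_nonneg fun j _ => hy0 i j
    · obtain ⟨⟨s, t⟩, hst, hsup⟩ := Finset.exists_mem_eq_sup _ hne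
        (fun p : W × W => r p.1 p.2)
      rw [hsup]
      rw [Finset.mem_product] at hst
      obtain ⟨hs, ht⟩ := hst
      rw [Finset.mem_sdiff] at ht
      have hsV : s ∈ V := by
        rw [hXe] at hs; exact (Finset.mem_filter.mp hs).1
      have hst' : s ≠ t := fun h => ht.2 (h ▸ hs)
      exact hreal s t hsV ht.1 hst' (Xe e) hs ht.2
  calc ∑ e ∈ T.edgeFinset, l e * (R (Xe e) : ℝ)
      ≤ ∑ e ∈ T.edgeFinset, l e * (∑ i ∈ Xe e, ∑ j ∈ (Xe e)ᶜ, y i j) :=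
        Finset.sum_le_sum fun e he => mul_le_mul_of_nonneg_left (hC e he) (hl e)
    _ = (1 / 2) * ∑ e ∈ T.edgeFinset, l e * (2 * ∑ i ∈ Xe e, ∑ j ∈ (Xe e)ᶜ, y i j) := by
        rw [Finset.mul_sum]
        refine Finset.sum_congr rfl fun e _ => ?_
        ring
    _ = (1 / 2) * ∑ i : W, ∑ j : W, a i j * y i j := by rw [hBig]
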